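/- arXiv:1210.0523 — 5 statements merged into one kernel-verified Lean document; each statement's English description precedes it below -/
import Mathlib

section
/- Let T = [[1,3],[0,1]] and R = [[0,1],[-1,-1]] in GL(2, ℤ). Then R^3 = I, and the group homomorphism from the free product ℤ ∗ ℤ/3ℤ to GL(2, ℤ) sending the generator of ℤ to T and the generator of ℤ/3ℤ to R is injective; in particular the subgroup of GL(2, ℤ) generated by R and T is isomorphic to ℤ ∗ ℤ/3ℤ. -/
open scoped MatrixGroups
open scoped Pointwise

namespace SL2PP

/-! ### An action of `GL(2,ℤ)` on `ℝ²` -/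

instance glSMul : SMul (GL (Fin 2) ℤ) (Fin 2 → ℝ) :=
  ⟨fun g v => ((g : Matrix (Fin 2) (Fin 2) ℤ).map ⇑(Int.castRingHom ℝ)).mulVec v⟩

lemma smul_def (g : GL (Fin 2) ℤ) (v : Fin 2 → ℝ) :
    g • v = ((g : Matrix (Fin 2) (Fin 2) ℤ).map ⇑(Int.castRingHom ℝ)).mulVec v := rfl

instance glAction : MulAction (GL (Fin 2) ℤ) (Fin 2 → ℝ) where
  one_smul v := by
    rw [smul_def]
    norm_num [Matrix.map_one (Int.castRingHom ℝ)]
  mul_smul g h v := by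
    rw [smul_def, smul_def, smul_def, Units.val_mul,
      Matrix.map_mul (f := Int.castRingHom ℝ), Matrix.mulVec_mulVec]

lemma smul_apply (g : GL (Fin 2) ℤ) (v : Fin 2 → ℝ) :
    g • v = ![((g : Matrix (Fin 2) (Fin 2) ℤ) 0 0 : ℝ) * v 0 + ((g : Matrix (Fin 2) (Fin 2) ℤ) 0 1 : ℝ) * v 1,
      ((g : Matrix (Fin 2) (Fin 2) ℤ) 1 0 : ℝ) * v 0 + ((g : Matrix (Fin 2) (Fin 2) ℤ) 1 1 : ℝ) * v 1] := by
  funext i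
  fin_cases i <;>
    simp [smul_def, Matrix.mulVec, dotProduct, Fin.sum_univ_two, Matrix.map_apply]

/-! ### Matrix computations -/

variable {R T : GL (Fin 2) ℤ}

lemma one_fin_two' : !![1, 0; 0, 1] = (1 : Matrix (Fin 2) (Fin 2) ℤ) := Matrix.one_fin_two.symm

lemma R_cubed (hR : (R : Matrix (Fin 2) (Fin 2) ℤ) = !![0, 1; -1, -1]) : R ^ 3 = 1 := by
  apply Units.ext
  rw [Units.val_pow_eq_pow_val, hR, Units.val_one]
  norm_num [pow_succ, Matrix.mul_fin_two]
  exact one_fin_two'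

lemma R_sq (hR : (R : Matrix (Fin 2) (Fin 2) ℤ) = !![0, 1; -1, -1]) :
    ((R ^ 2 : GL (Fin 2) ℤ) : Matrix (Fin 2) (Fin 2) ℤ) = !![-1, -1; 1, 0] := by
  rw [Units.val_pow_eq_pow_val, hR]
  norm_num [pow_succ, Matrix.mul_fin_two]

lemma T_inv (hT : (T : Matrix (Fin 2) (Fin 2) ℤ) = !![1, 3; 0, 1]) :
    ((T⁻¹ : GL (Fin 2) ℤ) : Matrix (Fin 2) (Fin 2) ℤ) = !![1, -3; 0, 1] := by
  have h : T⁻¹ = ⟨!![1, -3; 0, 1], !![1, 3; 0, 1],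
      by norm_num [Matrix.mul_fin_two]; exact one_fin_two',
      by norm_num [Matrix.mul_fin_two]; exact one_fin_two'⟩ := by
    apply inv_eq_of_mul_eq_one_right
    apply Units.ext
    rw [Units.val_mul, hT, Units.val_one]
    norm_num [Matrix.mul_fin_two]
    exact one_fin_two'
  rw [h]

lemma T_zpow (hT : (T : Matrix (Fin 2) (Fin 2) ℤ) = !![1, 3; 0, 1]) (n : ℤ) :
    ((T ^ n : GL (Fin 2) ℤ) : Matrix (Fin 2) (Fin 2) ℤ) = !![1, 3 * n; 0, 1] := by
  induction n using Int.induction_on with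
  | zero => simp [Matrix.one_fin_two]
  | succ k ih =>
      rw [zpow_add_one, Units.val_mul, ih, hT]
      norm_num [Matrix.mul_fin_two]
      ring_nf
  | pred k ih =>
      rw [zpow_sub_one, Units.val_mul, ih, T_inv hT]
      norm_num [Matrix.mul_fin_two]
      ring_nf

/-! ### The ping-pong sets -/

def Xset : Bool → Set (Fin 2 → ℝ)
  | true => {v | v 1 ≠ 0 ∧ (v 0 * v 1 < -2 * v 1 ^ 2 ∨ v 1 ^ 2 < v 0 * v 1)}
  | false => {v | v 1 ≠ 0 ∧ -2 * v 1 ^ 2 < v 0 * v 1 ∧ v 0 * v 1 < v 1 ^ 2}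

lemma T_smul (hT : (T : Matrix (Fin 2) (Fin 2) ℤ) = !![1, 3; 0, 1]) (n : ℤ) (hn : n ≠ 0)
    {v : Fin 2 → ℝ} (hv : v ∈ Xset false) : (T ^ n) • v ∈ Xset true := by
  obtain ⟨h1, h2, h3⟩ := hv
  rw [smul_apply, T_zpow hT n]
  simp only [Xset, Set.mem_setOf_eq, Matrix.cons_val', Matrix.cons_val_zero, Matrix.cons_val_one,
    Matrix.head_cons, Matrix.empty_val', Matrix.cons_val_fin_one, Matrix.head_fin_const,
    Matrix.of_apply] at *
  push_cast
  have hy : (0:ℝ) < v 1 ^ 2 := by positivity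
  refine ⟨by simpa using h1, ?_⟩
  rcases hn.lt_or_gt with h | h
  · left
    have hn' : (n : ℝ) ≤ -1 := by exact_mod_cast (by omega : n ≤ -1)
    nlinarith [h2, h3, hy]
  · right
    have hn' : (1:ℝ) ≤ (n : ℝ) := by exact_mod_cast (by omega : (1:ℤ) ≤ n)
    nlinarith [h2, h3, hy]

lemma R_smul (hR : (R : Matrix (Fin 2) (Fin 2) ℤ) = !![0, 1; -1, -1])
    {v : Fin 2 → ℝ} (hv : v ∈ Xset true) : R • v ∈ Xset false := by
  obtain ⟨h1, h2⟩ := hv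
  rw [smul_apply, hR]
  simp only [Xset, Set.mem_setOf_eq, Matrix.cons_val', Matrix.cons_val_zero, Matrix.cons_val_one,
    Matrix.head_cons, Matrix.empty_val', Matrix.cons_val_fin_one, Matrix.head_fin_const,
    Matrix.of_apply] at *
  push_cast
  have hy : (0:ℝ) < v 1 ^ 2 := by positivity
  set x := v 0 with hx
  set y := v 1 with hy'
  refine ⟨?_, ?_, ?_⟩
  · intro hc
    have hxy : x = -y := by linarith
    have hq : x * y = -y ^ 2 := by rw [hxy]; ring
    rcases h2 with h | h <;> nlinarith
  · rcases h2 with h | h <;> nlinarith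
  · rcases h2 with h | h <;> nlinarith

lemma R2_smul (hR : (R : Matrix (Fin 2) (Fin 2) ℤ) = !![0, 1; -1, -1])
    {v : Fin 2 → ℝ} (hv : v ∈ Xset true) : (R ^ 2) • v ∈ Xset false := by
  obtain ⟨h1, h2⟩ := hv
  rw [smul_apply, R_sq hR]
  simp only [Xset, Set.mem_setOf_eq, Matrix.cons_val', Matrix.cons_val_zero, Matrix.cons_val_one,
    Matrix.head_cons, Matrix.empty_val', Matrix.cons_val_fin_one, Matrix.head_fin_const,
    Matrix.of_apply] at *
  push_cast
  have hy : (0:ℝ) < v 1 ^ 2 := by positivity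
  set x := v 0 with hx
  set y := v 1 with hy'
  refine ⟨?_, ?_, ?_⟩
  · intro hc
    have hxy : x = 0 := by linarith
    have hq : x * y = 0 := by rw [hxy]; ring
    rcases h2 with h | h <;> nlinarith
  · rcases h2 with h | h <;>
      nlinarith [sq_nonneg (x + 2*y), sq_nonneg (x - y), sq_nonneg y]
  · rcases h2 with h | h <;>
      nlinarith [sq_nonneg (x + 2*y), sq_nonneg (x - y), sq_nonneg y]


/-! ### Bridge between `Monoid.Coprod` and `Monoid.CoprodI` -/

abbrev M := Multiplicative ℤ
abbrev N := Multiplicative (ZMod 3)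

abbrev Hb : Bool → Type := fun b => cond b M N

instance instGroupHb : ∀ b, Group (Hb b)
  | true => inferInstanceAs (Group M)
  | false => inferInstanceAs (Group N)

def fb : ∀ b, Hb b →* Monoid.Coprod M N
  | true => Monoid.Coprod.inl
  | false => Monoid.Coprod.inr

def toI : Monoid.Coprod M N →* Monoid.CoprodI Hb :=
  Monoid.Coprod.lift (Monoid.CoprodI.of : Hb true →* _) (Monoid.CoprodI.of : Hb false →* _)

def fromI : Monoid.CoprodI Hb →* Monoid.Coprod M N := Monoid.CoprodI.lift fb

lemma toI_inl (x : M) : toI (Monoid.Coprod.inl x) = Monoid.CoprodI.of (i := true) x :=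
  Monoid.Coprod.lift_apply_inl _ _ x

lemma toI_inr (x : N) : toI (Monoid.Coprod.inr x) = Monoid.CoprodI.of (i := false) x :=
  Monoid.Coprod.lift_apply_inr _ _ x

lemma fromI_comp_toI : fromI.comp toI = MonoidHom.id _ := by
  apply Monoid.Coprod.hom_ext <;> ext x
  · show fromI (toI (Monoid.Coprod.inl (Multiplicative.ofAdd 1))) = _
    rw [toI_inl]
    exact Monoid.CoprodI.lift_of fb _
  · show fromI (toI (Monoid.Coprod.inr (Multiplicative.ofAdd x))) = _
    rw [toI_inr]
    exact Monoid.CoprodI.lift_of fb _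

lemma toI_injective : Function.Injective toI :=
  Function.LeftInverse.injective (g := fromI) fun x =>
    DFunLike.congr_fun fromI_comp_toI x

/-! ### Ping-pong hypotheses -/

lemma Xnonempty : ∀ i, (Xset i).Nonempty := by
  intro i
  cases i
  · exact ⟨![0, 1], by norm_num [Xset]⟩
  · exact ⟨![2, 1], by norm_num [Xset]⟩

lemma Xdisj : Pairwise (Function.onFun Disjoint Xset) := by
  have key : Disjoint (Xset true) (Xset false) := by
    rw [Set.disjoint_left]
    rintro v ⟨h1, h2⟩ ⟨h1', h2', h3'⟩
    rcases h2 with h | h <;> linarith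
  intro i j hij
  cases i <;> cases j
  · exact absurd rfl hij
  · exact key.symm
  · exact key
  · exact absurd rfl hij

theorem phi_injective (hR : (R : Matrix (Fin 2) (Fin 2) ℤ) = !![0, 1; -1, -1])
    (hT : (T : Matrix (Fin 2) (Fin 2) ℤ) = !![1, 3; 0, 1])
    (φ : Monoid.Coprod M N →* GL (Fin 2) ℤ)
    (hφT : φ (Monoid.Coprod.inl (Multiplicative.ofAdd (1 : ℤ))) = T)
    (hφR : φ (Monoid.Coprod.inr (Multiplicative.ofAdd (1 : ZMod 3))) = R) :
    Function.Injective φ := by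
  have hinl : ∀ n : ℤ, φ (Monoid.Coprod.inl (Multiplicative.ofAdd n)) = T ^ n := by
    intro n
    have h : Multiplicative.ofAdd n = Multiplicative.ofAdd (1 : ℤ) ^ n := by
      rw [← ofAdd_zsmul]
      norm_num
    rw [h, map_zpow, map_zpow, hφT]
  -- the two key ping-pong moves, stated over `M` and `N`
  have hcaseT : ∀ h : M, h ≠ 1 → (φ.comp Monoid.Coprod.inl) h • Xset false ⊆ Xset true := by
    intro h hne
    have h0 : Multiplicative.toAdd h ≠ 0 := fun hc => hne (by rw [← ofAdd_toAdd h, hc]; rfl)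
    have hf : (φ.comp Monoid.Coprod.inl) h = T ^ Multiplicative.toAdd h := by
      show φ (Monoid.Coprod.inl h) = _
      conv_lhs => rw [← ofAdd_toAdd h]
      exact hinl _
    rw [hf]
    rintro x ⟨v, hv, rfl⟩
    exact T_smul hT _ h0 hv
  have hcaseR : ∀ h : N, h ≠ 1 → (φ.comp Monoid.Coprod.inr) h • Xset true ⊆ Xset false := by
    intro h hne
    have h0 : Multiplicative.toAdd h ≠ 0 := fun hc => hne (by rw [← ofAdd_toAdd h, hc]; rfl)
    have hk : Multiplicative.toAdd h = 1 ∨ Multiplicative.toAdd h = 2 := by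
      revert h0
      generalize Multiplicative.toAdd h = k
      revert k
      decide
    rcases hk with hk | hk
    · have hf : (φ.comp Monoid.Coprod.inr) h = R := by
        show φ (Monoid.Coprod.inr h) = R
        rw [← ofAdd_toAdd h, hk, hφR]
      rw [hf]
      rintro x ⟨v, hv, rfl⟩
      exact R_smul hR hv
    · have hf : (φ.comp Monoid.Coprod.inr) h = R ^ 2 := by
        show φ (Monoid.Coprod.inr h) = R ^ 2
        rw [← ofAdd_toAdd h, hk,
          show Multiplicative.ofAdd (2 : ZMod 3) =
            Multiplicative.ofAdd (1 : ZMod 3) * Multiplicative.ofAdd (1 : ZMod 3) from rfl,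
          map_mul, map_mul, hφR, sq]
      rw [hf]
      rintro x ⟨v, hv, rfl⟩
      exact R2_smul hR hv
  let f : ∀ b, Hb b →* GL (Fin 2) ℤ := fun b =>
    match b with
    | true => φ.comp Monoid.Coprod.inl
    | false => φ.comp Monoid.Coprod.inr
  have hcard : 3 ≤ Cardinal.mk Bool ∨ ∃ i, 3 ≤ Cardinal.mk (Hb i) := by
    right
    refine ⟨false, le_of_eq ?_⟩
    show (3 : Cardinal) = Cardinal.mk N
    rw [Cardinal.mk_congr (Multiplicative.toAdd (α := ZMod 3))]
    simp [ZMod]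
  have hpp : Pairwise fun i j => ∀ h : Hb i, h ≠ 1 → f i h • Xset j ⊆ Xset i := by
    intro i j hij
    cases i <;> cases j
    · exact absurd rfl hij
    · exact fun h hne => hcaseR h hne
    · exact fun h hne => hcaseT h hne
    · exact absurd rfl hij
  have hinj : Function.Injective (Monoid.CoprodI.lift f) :=
    Monoid.CoprodI.lift_injective_of_ping_pong f hcard Xset Xnonempty Xdisj hpp
  have hfac : φ = (Monoid.CoprodI.lift f).comp toI := by
    apply Monoid.Coprod.hom_ext
    · refine MonoidHom.ext fun x => ?_
      show φ (Monoid.Coprod.inl x) = (Monoid.CoprodI.lift f) (toI (Monoid.Coprod.inl x))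
      rw [toI_inl, Monoid.CoprodI.lift_of]
      rfl
    · refine MonoidHom.ext fun x => ?_
      show φ (Monoid.Coprod.inr x) = (Monoid.CoprodI.lift f) (toI (Monoid.Coprod.inr x))
      rw [toI_inr, Monoid.CoprodI.lift_of]
      rfl
  rw [hfac, MonoidHom.coe_comp]
  exact hinj.comp toI_injective


/-! ### The canonical homomorphism and the range computation -/

lemma range_M {K : Type*} [Group K] (g : M →* K) :
    g.range = Subgroup.zpowers (g (Multiplicative.ofAdd (1 : ℤ))) := by
  ext x
  rw [Subgroup.mem_zpowers_iff]
  constructor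
  · rintro ⟨y, rfl⟩
    refine ⟨Multiplicative.toAdd y, ?_⟩
    rw [← map_zpow, ← ofAdd_zsmul]
    norm_num
  · rintro ⟨n, rfl⟩
    exact ⟨Multiplicative.ofAdd (1 : ℤ) ^ n, map_zpow g _ n⟩

lemma range_N {K : Type*} [Group K] (g : N →* K) :
    g.range = Subgroup.zpowers (g (Multiplicative.ofAdd (1 : ZMod 3))) := by
  have hy : ∀ y : N, y = Multiplicative.ofAdd (1 : ZMod 3) ^ (Multiplicative.toAdd y).val := by
    decide
  ext x
  rw [Subgroup.mem_zpowers_iff]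
  constructor
  · rintro ⟨y, rfl⟩
    exact ⟨((Multiplicative.toAdd y).val : ℤ), by rw [zpow_natCast, ← map_pow, ← hy y]⟩
  · rintro ⟨n, rfl⟩
    exact ⟨Multiplicative.ofAdd (1 : ZMod 3) ^ n, map_zpow g _ n⟩

noncomputable def phi0 (R T : GL (Fin 2) ℤ) (h3 : R ^ 3 = 1) :
    Monoid.Coprod M N →* GL (Fin 2) ℤ :=
  Monoid.Coprod.lift (zpowersHom _ T)
    (AddMonoidHom.toMultiplicativeLeft
      (ZMod.lift 3 ⟨zmultiplesHom (Additive (GL (Fin 2) ℤ)) (Additive.ofMul R), by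
        show (3 : ℤ) • Additive.ofMul R = 0
        rw [← ofMul_zpow, ofMul_eq_zero]
        exact_mod_cast h3⟩))

lemma phi0_inl (h3 : R ^ 3 = 1) :
    phi0 R T h3 (Monoid.Coprod.inl (Multiplicative.ofAdd (1 : ℤ))) = T := by
  rw [phi0, Monoid.Coprod.lift_apply_inl, zpowersHom_apply]
  simp

lemma phi0_inr (h3 : R ^ 3 = 1) :
    phi0 R T h3 (Monoid.Coprod.inr (Multiplicative.ofAdd (1 : ZMod 3))) = R := by
  rw [phi0, Monoid.Coprod.lift_apply_inr, AddMonoidHom.coe_toMultiplicativeLeft]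
  simp only [Function.comp_apply, toAdd_ofAdd]
  rw [show (1 : ZMod 3) = ((1 : ℤ) : ZMod 3) by norm_num, ZMod.lift_coe]
  show Additive.toMul ((1 : ℤ) • Additive.ofMul R) = R
  simp

end SL2PP

open SL2PP

/-- For `T = [[1,3],[0,1]]` and `R = [[0,1],[-1,-1]]` in `GL(2,ℤ)` we have
`R^3 = 1`, the homomorphism `ℤ ∗ ℤ/3ℤ →* GL(2,ℤ)` sending the generator of `ℤ` to `T`
and the generator of `ℤ/3ℤ` to `R` is injective, and consequently the subgroup of
`GL(2,ℤ)` generated by `R` and `T` is isomorphic to `ℤ ∗ ℤ/3ℤ`. -/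
theorem sl2_hypergeometric_splits_as_Z_free_prod_Z3
    (R T : GL (Fin 2) ℤ)
    (hR : (R : Matrix (Fin 2) (Fin 2) ℤ) = !![0, 1; -1, -1])
    (hT : (T : Matrix (Fin 2) (Fin 2) ℤ) = !![1, 3; 0, 1]) :
    R ^ 3 = 1 ∧
    (∀ φ : Monoid.Coprod (Multiplicative ℤ) (Multiplicative (ZMod 3)) →* GL (Fin 2) ℤ,
        φ (Monoid.Coprod.inl (Multiplicative.ofAdd (1 : ℤ))) = T →
        φ (Monoid.Coprod.inr (Multiplicative.ofAdd (1 : ZMod 3))) = R →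
        Function.Injective φ) ∧
    Nonempty (Monoid.Coprod (Multiplicative ℤ) (Multiplicative (ZMod 3)) ≃*
      (Subgroup.closure ({R, T} : Set (GL (Fin 2) ℤ)))) := by
  have h3 : R ^ 3 = 1 := R_cubed hR
  refine ⟨h3, fun φ hφT hφR => phi_injective hR hT φ hφT hφR, ?_⟩
  have hinj : Function.Injective (phi0 R T h3) :=
    phi_injective hR hT _ (phi0_inl h3) (phi0_inr h3)
  have hrange : (phi0 R T h3).range = Subgroup.closure ({R, T} : Set (GL (Fin 2) ℤ)) := by
    rw [Monoid.Coprod.range_eq, range_M, range_N, MonoidHom.comp_apply, MonoidHom.comp_apply,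
      phi0_inl h3, phi0_inr h3,
      Subgroup.zpowers_eq_closure, Subgroup.zpowers_eq_closure, ← Subgroup.closure_union]
    congr 1
    rw [Set.union_comm]
    rfl
  exact ⟨(MonoidHom.ofInjective hinj).trans (MulEquiv.subgroupCongr hrange)⟩
end

section
/- For all integers d, k, let R, T be the above 4×4 integer matrices and let B = [[-1,0,0,0],[0,1,0,-1],[-d,0,1,0],[0,0,0,-1]]. Then B^2 = I, B·R·B = R^{-1}, and B·T^{-1}·B = T. -/
set_option maxHeartbeats 800000

open scoped MatrixGroups

private lemma mulmat_aux (d k : ℤ) :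
    (!![-1, 0, 0, 0; 0, 1, 0, -1; -d, 0, 1, 0; 0, 0, 0, -1] *
      !![1, 1, 0, 0; 0, 1 - k, -1, 1; d, d, 1, 0; 0, -k, -1, 1]
        : Matrix (Fin 4) (Fin 4) ℤ) =
    !![-1, -1, 0, 0; 0, 1, 0, 0; 0, 0, 1, 0; 0, k, 1, -1] := by
  ext i j
  fin_cases i <;> fin_cases j <;>
    simp [Matrix.mul_apply, Fin.sum_univ_four, Matrix.vecHead, Matrix.vecTail] <;> ring

/-- For all integers `d, k`, with `R = T·U`, `T` the hypergeometric
matrices and `B = [[-1,0,0,0],[0,1,0,-1],[-d,0,1,0],[0,0,0,-1]]`, we have `B² = 1`,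
`B·R·B = R⁻¹` and `B·T⁻¹·B = T` in `GL(4,ℤ)`. -/
theorem involution_conjugates_R_to_inverse
    (d k : ℤ) (R T B : GL (Fin 4) ℤ)
    (hR : (R : Matrix (Fin 4) (Fin 4) ℤ) =
      !![1, 1, 0, 0; 0, 1 - k, -1, 1; d, d, 1, 0; 0, -k, -1, 1])
    (hT : (T : Matrix (Fin 4) (Fin 4) ℤ) =
      !![1, 0, 0, 0; 0, 1, 0, 1; 0, 0, 1, 0; 0, 0, 0, 1])
    (hB : (B : Matrix (Fin 4) (Fin 4) ℤ) =
      !![-1, 0, 0, 0; 0, 1, 0, -1; -d, 0, 1, 0; 0, 0, 0, -1]) :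
    B ^ 2 = 1 ∧ B * R * B = R⁻¹ ∧ B * T⁻¹ * B = T := by
  have hB2 : B * B = 1 := by
    apply Units.ext
    rw [Units.val_mul, hB, Units.val_one]
    ext i j
    fin_cases i <;> fin_cases j <;>
      simp [Matrix.mul_apply, Fin.sum_univ_four, Matrix.one_apply,
        Matrix.vecHead, Matrix.vecTail]
  refine ⟨by rw [pow_two]; exact hB2, ?_, ?_⟩
  · refine eq_inv_of_mul_eq_one_left ?_
    apply Units.ext
    rw [Units.val_mul, Units.val_mul, Units.val_mul, hB, hR, Units.val_one,
      mulmat_aux]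
    have h2 : (!![-1, -1, 0, 0; 0, 1, 0, 0; 0, 0, 1, 0; 0, k, 1, -1] *
        !![-1, 0, 0, 0; 0, 1, 0, -1; -d, 0, 1, 0; 0, 0, 0, -1]
          : Matrix (Fin 4) (Fin 4) ℤ) =
        !![1, -1, 0, 1; 0, 1, 0, -1; -d, 0, 1, 0; -d, k, 1, 1 - k] := by
      ext i j
      fin_cases i <;> fin_cases j <;>
        simp [Matrix.mul_apply, Fin.sum_univ_four, Matrix.vecHead, Matrix.vecTail] <;> ring
    rw [h2]
    ext i j
    fin_cases i <;> fin_cases j <;>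
      simp [Matrix.mul_apply, Fin.sum_univ_four, Matrix.one_apply,
        Matrix.vecHead, Matrix.vecTail] <;> ring
  · have key : (B * T * B) * T = 1 := by
      apply Units.ext
      rw [Units.val_mul, Units.val_mul, Units.val_mul, hB, hT, Units.val_one]
      have h1 : (!![-1, 0, 0, 0; 0, 1, 0, -1; -d, 0, 1, 0; 0, 0, 0, -1] *
          !![1, 0, 0, 0; 0, 1, 0, 1; 0, 0, 1, 0; 0, 0, 0, 1]
            : Matrix (Fin 4) (Fin 4) ℤ) =
          !![-1, 0, 0, 0; 0, 1, 0, 0; -d, 0, 1, 0; 0, 0, 0, -1] := by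
        ext i j
        fin_cases i <;> fin_cases j <;>
          simp [Matrix.mul_apply, Fin.sum_univ_four, Matrix.vecHead, Matrix.vecTail]
      rw [h1]
      have h2 : (!![-1, 0, 0, 0; 0, 1, 0, 0; -d, 0, 1, 0; 0, 0, 0, -1] *
          !![-1, 0, 0, 0; 0, 1, 0, -1; -d, 0, 1, 0; 0, 0, 0, -1]
            : Matrix (Fin 4) (Fin 4) ℤ) =
          !![1, 0, 0, 0; 0, 1, 0, -1; 0, 0, 1, 0; 0, 0, 0, 1] := by
        ext i j
        fin_cases i <;> fin_cases j <;>
          simp [Matrix.mul_apply, Fin.sum_univ_four, Matrix.vecHead, Matrix.vecTail]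
      rw [h2]
      ext i j
      fin_cases i <;> fin_cases j <;>
        simp [Matrix.mul_apply, Fin.sum_univ_four, Matrix.one_apply,
          Matrix.vecHead, Matrix.vecTail]
    have hTinv : T⁻¹ = B * T * B := (eq_inv_of_mul_eq_one_left key).symm
    rw [hTinv]
    calc B * (B * T * B) * B = (B * B) * T * (B * B) := by group
      _ = T := by rw [hB2]; simp
end

section
/- Let R and T be the above 4×4 integer matrices with d = 1 and k = 2 (the case with parameters (1/6, 1/6, 5/6, 5/6)). Then (R·T)^8 = I. In particular, the group homomorphism from the free group on two generators to GL(4, ℤ) sending the generators to T and R is not injective, so the subgroup generated by R and T is not the free product of the cyclic subgroups generated by T and by R. -/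
open scoped MatrixGroups

lemma Tzpow (T : GL (Fin 4) ℤ)
    (hT : (T : Matrix (Fin 4) (Fin 4) ℤ) =
      !![1, 0, 0, 0; 0, 1, 0, 1; 0, 0, 1, 0; 0, 0, 0, 1]) :
    ∀ n : ℤ, ((T ^ n : GL (Fin 4) ℤ) : Matrix (Fin 4) (Fin 4) ℤ) =
      !![1, 0, 0, 0; 0, 1, 0, (n:ℤ); 0, 0, 1, 0; 0, 0, 0, 1] := by
  have hTinv : ((T⁻¹ : GL (Fin 4) ℤ) : Matrix (Fin 4) (Fin 4) ℤ) =
      !![1, 0, 0, 0; 0, 1, 0, -1; 0, 0, 1, 0; 0, 0, 0, 1] := by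
    have h1 : (T : Matrix (Fin 4) (Fin 4) ℤ) *
        !![1, 0, 0, 0; 0, 1, 0, -1; 0, 0, 1, 0; 0, 0, 0, 1] = 1 := by
      rw [hT]
      norm_num [Matrix.mul_apply, Fin.sum_univ_four]
      ext i j
      fin_cases i <;> fin_cases j <;> simp [Matrix.one_apply, Matrix.vecHead, Matrix.vecTail]
    calc ((T⁻¹ : GL (Fin 4) ℤ) : Matrix (Fin 4) (Fin 4) ℤ)
        = ((T⁻¹ : GL (Fin 4) ℤ) : Matrix (Fin 4) (Fin 4) ℤ) *
          ((T : Matrix (Fin 4) (Fin 4) ℤ) *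
            !![1, 0, 0, 0; 0, 1, 0, -1; 0, 0, 1, 0; 0, 0, 0, 1]) := by rw [h1, mul_one]
      _ = (((T⁻¹ * T : GL (Fin 4) ℤ)) : Matrix (Fin 4) (Fin 4) ℤ) *
            !![1, 0, 0, 0; 0, 1, 0, -1; 0, 0, 1, 0; 0, 0, 0, 1] := by
          rw [Units.val_mul, mul_assoc]
      _ = _ := by rw [inv_mul_cancel]; simp
  intro n
  induction n using Int.induction_on with
  | zero =>
    simp only [zpow_zero, Units.val_one]
    ext i j
    fin_cases i <;> fin_cases j <;> simp [Matrix.one_apply, Matrix.vecHead, Matrix.vecTail]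
  | succ k ih =>
    have : T ^ ((k : ℤ) + 1) = T ^ (k : ℤ) * T := by rw [zpow_add, zpow_one]
    rw [this, Units.val_mul, ih, hT]
    ext i j
    fin_cases i <;> fin_cases j <;>
      simp [Matrix.mul_apply, Fin.sum_univ_four, Matrix.vecHead, Matrix.vecTail] <;> ring
  | pred k ih =>
    have : T ^ (-(k : ℤ) - 1) = T ^ (-(k : ℤ)) * T⁻¹ := by
      rw [← zpow_neg_one, ← zpow_add]; ring_nf
    rw [this, Units.val_mul, ih, hTinv]
    ext i j
    fin_cases i <;> fin_cases j <;>
      simp [Matrix.mul_apply, Fin.sum_univ_four, Matrix.vecHead, Matrix.vecTail] <;> ring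

/-- For `d = 1`, `k = 2` (parameters `(1/6,1/6,5/6,5/6)`), the
hypergeometric matrices satisfy `(R·T)^8 = 1`. In particular the homomorphism from the
free group on two generators sending the generators to `T` and `R` is not injective, and
no homomorphism from the free product of the cyclic subgroups generated by `T` and by `R`
restricting to the identity on each factor is injective. -/
theorem relation_RT_pow_eight
    (R T : GL (Fin 4) ℤ)
    (hR : (R : Matrix (Fin 4) (Fin 4) ℤ) =
      !![1, 1, 0, 0; 0, -1, -1, 1; 1, 1, 1, 0; 0, -2, -1, 1])
    (hT : (T : Matrix (Fin 4) (Fin 4) ℤ) =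
      !![1, 0, 0, 0; 0, 1, 0, 1; 0, 0, 1, 0; 0, 0, 0, 1]) :
    (R * T) ^ 8 = 1 ∧
    ¬ Function.Injective (FreeGroup.lift ![T, R] : FreeGroup (Fin 2) →* GL (Fin 4) ℤ) ∧
    (∀ ψ : Monoid.Coprod (Subgroup.zpowers T) (Subgroup.zpowers R) →* GL (Fin 4) ℤ,
        (∀ g : Subgroup.zpowers T, ψ (Monoid.Coprod.inl g) = (g : GL (Fin 4) ℤ)) →
        (∀ g : Subgroup.zpowers R, ψ (Monoid.Coprod.inr g) = (g : GL (Fin 4) ℤ)) →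
        ¬ Function.Injective ψ) := by
  have hmain : (R * T) ^ 8 = 1 := by
    ext : 1
    rw [Units.val_pow_eq_pow_val, Units.val_mul, hR, hT, Units.val_one]
    norm_num [pow_succ, Matrix.mul_apply, Fin.sum_univ_four]
    ext i j
    fin_cases i <;> fin_cases j <;> simp [Matrix.one_apply, Matrix.vecHead, Matrix.vecTail]
  refine ⟨hmain, ?_, ?_⟩
  · intro hinj
    set w : FreeGroup (Fin 2) := (FreeGroup.of 1 * FreeGroup.of 0) ^ 8 with hw
    have h1 : (FreeGroup.lift ![T, R] : FreeGroup (Fin 2) →* GL (Fin 4) ℤ) w = 1 := by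
      simp [hw, map_pow, map_mul, FreeGroup.lift_apply_of]
      exact hmain
    have h2 : w = 1 := hinj (by simpa using h1)
    have h3 := congrArg (FreeGroup.lift (fun _ : Fin 2 => Multiplicative.ofAdd (1 : ℤ))) h2
    simp [hw, map_pow, map_mul, FreeGroup.lift_apply_of, ← ofAdd_add] at h3
  · intro ψ hl hr hinj
    have injT : ∀ m n : ℤ, T ^ m = T ^ n → m = n := by
      intro m n h
      have := congrArg (fun u : GL (Fin 4) ℤ => (u : Matrix (Fin 4) (Fin 4) ℤ) 1 3) h
      simpa [Tzpow T hT] using this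
    have hmem : ∀ x : Subgroup.zpowers T, ∃ n : ℤ, T ^ n = (x : GL (Fin 4) ℤ) :=
      fun x => Subgroup.mem_zpowers_iff.mp x.2
    set e : Subgroup.zpowers T → ℤ := fun x => Classical.choose (hmem x) with he'
    have he : ∀ x, T ^ (e x) = (x : GL (Fin 4) ℤ) := fun x => Classical.choose_spec (hmem x)
    set f : Subgroup.zpowers T →* Multiplicative ℤ :=
      { toFun := fun x => Multiplicative.ofAdd (e x)
        map_one' := by
          have : e 1 = 0 := injT _ _ (by rw [he]; simp)
          simp [this]
        map_mul' := by
          intro x y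
          have : e (x * y) = e x + e y := by
            apply injT
            rw [he, zpow_add, he, he]
            simp
          simp [this, ofAdd_add] } with hf
    set θ : Monoid.Coprod (Subgroup.zpowers T) (Subgroup.zpowers R) →* Multiplicative ℤ :=
      Monoid.Coprod.lift f 1 with hθ
    set c : Monoid.Coprod (Subgroup.zpowers T) (Subgroup.zpowers R) :=
      (Monoid.Coprod.inr (⟨R, Subgroup.mem_zpowers R⟩ : Subgroup.zpowers R) *
        Monoid.Coprod.inl (⟨T, Subgroup.mem_zpowers T⟩ : Subgroup.zpowers T)) ^ 8 with hc
    have hψc : ψ c = 1 := by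
      rw [hc, map_pow, map_mul, hl, hr]
      exact hmain
    have hc1 : c = 1 := hinj (by rw [hψc, map_one])
    have hθc := congrArg θ hc1
    have heT : e ⟨T, Subgroup.mem_zpowers T⟩ = 1 := injT _ _ (by rw [he]; simp)
    rw [hc, map_pow, map_mul, map_one, hθ] at hθc
    simp [Monoid.Coprod.lift_apply_inl, Monoid.Coprod.lift_apply_inr, hf, heT] at hθc
end

section
/- Let R and T be the above 4×4 integer matrices with d = 2 and k = 3 (the case with parameters (1/4, 1/3, 2/3, 3/4)). Then (R^6·T)^2·(R^6·T^{-1})^2 = I, where T^{-1} is the inverse of T in GL(4, ℤ). -/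
open scoped MatrixGroups

set_option maxHeartbeats 4000000 in
/-- For `d = 2`, `k = 3` (parameters `(1/4,1/3,2/3,3/4)`), the
hypergeometric matrices satisfy `(R^6·T)²·(R^6·T⁻¹)² = 1`, where `T⁻¹` is the inverse
of `T` in `GL(4,ℤ)`. -/
theorem relation_d2_k3
    (R T : GL (Fin 4) ℤ)
    (hR : (R : Matrix (Fin 4) (Fin 4) ℤ) =
      !![1, 1, 0, 0; 0, -2, -1, 1; 2, 2, 1, 0; 0, -3, -1, 1])
    (hT : (T : Matrix (Fin 4) (Fin 4) ℤ) =
      !![1, 0, 0, 0; 0, 1, 0, 1; 0, 0, 1, 0; 0, 0, 0, 1]) :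
    (R ^ 6 * T) ^ 2 * (R ^ 6 * T⁻¹) ^ 2 = 1 := by
  set A : Matrix (Fin 4) (Fin 4) ℤ := (R : Matrix (Fin 4) (Fin 4) ℤ) with hA
  set B : Matrix (Fin 4) (Fin 4) ℤ := (T : Matrix (Fin 4) (Fin 4) ℤ) with hB
  set C : Matrix (Fin 4) (Fin 4) ℤ := ((T⁻¹ : GL (Fin 4) ℤ) : Matrix (Fin 4) (Fin 4) ℤ) with hC
  have hTi : C = !![1, 0, 0, 0; 0, 1, 0, -1; 0, 0, 1, 0; 0, 0, 0, 1] := by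
    have h1 : C * B = 1 := by
      rw [hC, hB, ← Units.val_mul, inv_mul_cancel]; rfl
    have h2 : B * !![1, 0, 0, 0; 0, 1, 0, -1; 0, 0, 1, 0; 0, 0, 0, 1] = 1 := by
      rw [hT]
      ext i j
      fin_cases i <;> fin_cases j <;>
        simp [Matrix.mul_apply, Fin.sum_univ_four, Matrix.one_apply,
          Matrix.vecHead, Matrix.vecTail]
    calc C = C * (B * !![1, 0, 0, 0; 0, 1, 0, -1; 0, 0, 1, 0; 0, 0, 0, 1]) := by
            rw [h2, mul_one]
      _ = !![1, 0, 0, 0; 0, 1, 0, -1; 0, 0, 1, 0; 0, 0, 0, 1] := by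
            rw [← mul_assoc, h1, one_mul]
  have p1 : A ^ 1 = A := pow_one A
  have p2 : A ^ 2 = !![1, -1, -1, 1; -2, -1, 0, -1; 4, 0, -1, 2; -2, 1, 1, -2] := by
    rw [pow_succ, p1, hR]
    ext i j
    fin_cases i <;> fin_cases j <;>
      simp [Matrix.mul_apply, Fin.sum_univ_four, Matrix.vecHead, Matrix.vecTail]
  have p3 : A ^ 3 = !![-1, -2, -1, 0; -2, 3, 2, -2; 2, -4, -3, 2; 0, 4, 2, -1] := by
    rw [pow_succ, p2, hR]
    ext i j
    fin_cases i <;> fin_cases j <;>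
      simp [Matrix.mul_apply, Fin.sum_univ_four, Matrix.vecHead, Matrix.vecTail]
  have p4 : A ^ 4 = !![-3, 1, 1, -2; 2, 2, 1, 1; -4, -2, -1, -2; 4, -1, -1, 3] := by
    rw [pow_succ, p3, hR]
    ext i j
    fin_cases i <;> fin_cases j <;>
      simp [Matrix.mul_apply, Fin.sum_univ_four, Matrix.vecHead, Matrix.vecTail]
  have p5 : A ^ 5 = !![-1, 3, 2, -1; 4, -3, -2, 3; -6, 4, 3, -4; 2, -5, -3, 2] := by
    rw [pow_succ, p4, hR]
    ext i j
    fin_cases i <;> fin_cases j <;>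
      simp [Matrix.mul_apply, Fin.sum_univ_four, Matrix.vecHead, Matrix.vecTail]
  have p6 : A ^ 6 = !![3, 0, 0, 2; 0, -3, -2, 0; 0, 4, 3, 0; -4, 0, 0, -3] := by
    rw [pow_succ, p5, hR]
    ext i j
    fin_cases i <;> fin_cases j <;>
      simp [Matrix.mul_apply, Fin.sum_univ_four, Matrix.vecHead, Matrix.vecTail]
  have hX : A ^ 6 * B = !![3, 0, 0, 2; 0, -3, -2, -3; 0, 4, 3, 4; -4, 0, 0, -3] := by
    rw [p6, hT]
    ext i j
    fin_cases i <;> fin_cases j <;>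
      simp [Matrix.mul_apply, Fin.sum_univ_four, Matrix.vecHead, Matrix.vecTail]
  have hY : A ^ 6 * C = !![3, 0, 0, 2; 0, -3, -2, 3; 0, 4, 3, -4; -4, 0, 0, -3] := by
    rw [p6, hTi]
    ext i j
    fin_cases i <;> fin_cases j <;>
      simp [Matrix.mul_apply, Fin.sum_univ_four, Matrix.vecHead, Matrix.vecTail]
  have hXX : (A ^ 6 * B) * (A ^ 6 * B) =
      !![1, 0, 0, 0; 12, 1, 0, 10; -16, 0, 1, -12; 0, 0, 0, 1] := by
    rw [hX]
    ext i j
    fin_cases i <;> fin_cases j <;>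
      simp [Matrix.mul_apply, Fin.sum_univ_four, Matrix.vecHead, Matrix.vecTail]
  have hYY : (A ^ 6 * C) * (A ^ 6 * C) =
      !![1, 0, 0, 0; -12, 1, 0, -10; 16, 0, 1, 12; 0, 0, 0, 1] := by
    rw [hY]
    ext i j
    fin_cases i <;> fin_cases j <;>
      simp [Matrix.mul_apply, Fin.sum_univ_four, Matrix.vecHead, Matrix.vecTail]
  apply Units.ext
  have key : ((((R ^ 6 * T) ^ 2 * (R ^ 6 * T⁻¹) ^ 2 : GL (Fin 4) ℤ)) : Matrix (Fin 4) (Fin 4) ℤ)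
      = ((A ^ 6 * B) * (A ^ 6 * B)) * ((A ^ 6 * C) * (A ^ 6 * C)) := by
    rw [hA, hB, hC]
    push_cast
    rw [sq, sq, mul_assoc]
  rw [key, hXX, hYY]
  show _ = (1 : GL (Fin 4) ℤ).val
  have h1 : ((1 : GL (Fin 4) ℤ) : Matrix (Fin 4) (Fin 4) ℤ) = 1 := rfl
  rw [h1]
  ext i j
  fin_cases i <;> fin_cases j <;>
    simp [Matrix.mul_apply, Fin.sum_univ_four, Matrix.one_apply,
      Matrix.vecHead, Matrix.vecTail]
end

section
/- Let R and T be the above 4×4 integer matrices with d = 3 and k = 4 (the case with parameters (1/6, 1/3, 2/3, 5/6)). Then (R^3·T)^2·(R^3·T^{-1})^2 = I, where T^{-1} is the inverse of T in GL(4, ℤ). -/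
open scoped MatrixGroups

/-- For `d = 3`, `k = 4` (parameters `(1/6,1/3,2/3,5/6)`), the
hypergeometric matrices satisfy `(R^3·T)²·(R^3·T⁻¹)² = 1`, where `T⁻¹` is the inverse
of `T` in `GL(4,ℤ)`. -/
theorem relation_d3_k4
    (R T : GL (Fin 4) ℤ)
    (hR : (R : Matrix (Fin 4) (Fin 4) ℤ) =
      !![1, 1, 0, 0; 0, -3, -1, 1; 3, 3, 1, 0; 0, -4, -1, 1])
    (hT : (T : Matrix (Fin 4) (Fin 4) ℤ) =
      !![1, 0, 0, 0; 0, 1, 0, 1; 0, 0, 1, 0; 0, 0, 0, 1]) :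
    (R ^ 3 * T) ^ 2 * (R ^ 3 * T⁻¹) ^ 2 = 1 := by
  have h1 : (T : Matrix (Fin 4) (Fin 4) ℤ) *
      !![1, 0, 0, 0; 0, 1, 0, -1; 0, 0, 1, 0; 0, 0, 0, 1] = 1 := by
    rw [hT]; decide
  have h2 : !![(1:ℤ), 0, 0, 0; 0, 1, 0, -1; 0, 0, 1, 0; 0, 0, 0, 1] *
      (T : Matrix (Fin 4) (Fin 4) ℤ) = 1 := by
    rw [hT]; decide
  have hTinv : ((T⁻¹ : GL (Fin 4) ℤ) : Matrix (Fin 4) (Fin 4) ℤ) =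
      !![1, 0, 0, 0; 0, 1, 0, -1; 0, 0, 1, 0; 0, 0, 0, 1] := by
    have : T⁻¹ = (⟨!![1,0,0,0;0,1,0,-1;0,0,1,0;0,0,0,1], T.val, h2, h1⟩ : GL (Fin 4) ℤ) :=
      inv_eq_of_mul_eq_one_right (by ext : 1; exact h1)
    rw [this]
  ext : 1
  simp only [Units.val_mul, Units.val_pow_eq_pow_val, hR, hT, hTinv, Units.val_one]
  decide
end
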